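/- Let E be an empty state with S_k ↦ E, not S_{k+1} ↦ E, and ℓ(E) = 2k+1. Then E is weakly embanked if and only if both a_0(E) < 2^{2k+1} − 1 and a_1(E) < 3·2^{2k} − 1. -/

import Mathlib

open scoped Classical

namespace Skelet17

/-- The five kinds of transition rules. -/
inductive Rule
  | overflow | halt | zero | halve | increment
  deriving DecidableEq

/-- A state `(a_ℓ, …, a_1, a_0)` (written left to right, `a_0` rightmost) is stored
as the list `[a_0, a_1, …, a_ℓ]`, i.e. with the *rightmost* entry first. -/
abbrev State := List ℤ

/-- The leftmost entry `a_ℓ` of a state. -/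
def leftmost (S : State) : ℤ := S.getLastD 0

/-- The entry `a_i(S)`. -/
def entry (S : State) (i : ℕ) : ℤ := S.getD i 0

/-- `ℓ(S) = |S| - 1`. -/
def ell (S : State) : ℕ := S.length - 1

/-- The Overflow rule applies: the leftmost entry is odd and all other entries are even. -/
def OverflowCond (S : State) : Prop := Odd (leftmost S) ∧ ∀ x ∈ S.dropLast, Even x

/-- The Halt rule applies: all entries are even and the two leftmost entries are `0`. -/
def HaltCond (S : State) : Prop :=
  (∀ x ∈ S, Even x) ∧ S.getLastD 1 = 0 ∧ S.dropLast.getLastD 1 = 0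

/-- The Zero rule applies: all entries are even and the Halt rule does not apply. -/
def ZeroCond (S : State) : Prop := (∀ x ∈ S, Even x) ∧ ¬ HaltCond S

/-- The Halve rule applies: `a_0 = -1` and none of the earlier rules applies. -/
def HalveCond (S : State) : Prop :=
  ¬ OverflowCond S ∧ ¬ HaltCond S ∧ ¬ ZeroCond S ∧ S.headD 0 = -1

/-- The rule applied to a state (the first matching rule). -/
noncomputable def ruleOf (S : State) : Rule :=
  if OverflowCond S then .overflow
  else if HaltCond S then .halt
  else if ZeroCond S then .zero
  else if S.headD 0 = -1 then .halve
  else .increment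

/-- The transition function `P`.  (On a Halt state the process stops; we set `P S = S` there.)
Recall the list stores `a_0` first, so e.g. the Overflow rule
`(2a_ℓ+1, 2a_{ℓ-1}, …, 2a_0) ↦ (0, 2a_ℓ+2, 2a_{ℓ-1}, …, 2a_0)` appends a `0` at the end of
the list and adds `1` to the previously last element. -/
noncomputable def P (S : State) : State :=
  match ruleOf S with
  | .overflow => S.dropLast ++ [leftmost S + 1, 0]
  | .halt => S
  | .zero => (S.set 0 (S.headD 0 - 1)).set (S.length - 1) (leftmost S + 1) ++ [0, 0]
  | .halve => S.tail
  | .increment =>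
      let i := S.findIdx (fun x => x % 2 != 0)   -- index of the rightmost odd entry
      (S.set (i + 1) (S.getD (i + 1) 0 + 1)).set 0 (S.headD 0 - 1)

/-- `S ↦ T` : some iterate of `P` sends `S` to `T`. -/
def Reaches (S T : State) : Prop := ∃ m : ℕ, P^[m] S = T

/-- `σ(S) = +1` if the sum of the entries is odd, `-1` if it is even. -/
noncomputable def sigma (S : State) : ℤ := if Odd S.sum then 1 else -1

/-- `n(S)`: the natural number whose Gray code digits (least significant first) are
`a_1 mod 2, a_2 mod 2, …, a_ℓ mod 2`.  Equivalently (standard Gray-code decoding),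
bit `i` of `n(S)` is the parity of `a_{i+1} + ⋯ + a_ℓ`. -/
def nOf (S : State) : ℕ :=
  ∑ i ∈ Finset.range (ell S),
    2 ^ i * ((∑ j ∈ Finset.Icc (i + 1) (ell S), entry S j) % 2).toNat

/-- `⟨a / 2^j⟩` : the nearest integer to `a / 2^j`, rounding half-integers up. -/
def nearest (j a : ℕ) : ℕ := (2 * a + 2 ^ j) / 2 ^ (j + 1)

/-- `d_j(a, b) = |⟨a/2^j⟩ - ⟨b/2^j⟩|`. -/
def dd (j a b : ℕ) : ℕ := Nat.dist (nearest j a) (nearest j b)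

/-- `S_k = (0, 2, 2^2, …, 2^{2k}, 0)`. -/
def Sk (k : ℕ) : State :=
  0 :: (((List.range (2 * k)).map fun i => (2 : ℤ) ^ (2 * k - i)) ++ [0])

/-- An empty state: `n(E) = 0`, `σ(E) = -1`, and the next rule applied is not Halt. -/
def IsEmptyState (E : State) : Prop :=
  E ≠ [] ∧ nOf E = 0 ∧ sigma E = -1 ∧ ruleOf E ≠ Rule.halt

/-- `m` is the first positive time at which the trajectory of `E` is at an empty state. -/
def NextEmptyAt (E : State) (m : ℕ) : Prop :=
  0 < m ∧ IsEmptyState (P^[m] E) ∧ ∀ t, 0 < t → t < m → ¬ IsEmptyState (P^[t] E)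

/-- `N(E)` : the next empty state after `E` (junk value `[]` if it does not exist). -/
noncomputable def N (E : State) : State :=
  if h : ∃ m, NextEmptyAt E m then P^[h.choose] E else []

/-- The rule applied at time `j` belongs to `T_E`, the sequence of rules from `E` to the
next empty state after `E` (all rules after `E` when no next empty state exists). -/
def InTE (E : State) (j : ℕ) : Prop := ∀ t, 0 < t → t ≤ j → ¬ IsEmptyState (P^[t] E)

/-- Weakly embanked: `T_E` consists of one Zero rule at the start and contains at least two
Halve rules, and all other rules before the second Halve rule are Increment rules. -/
def WeaklyEmbanked (E : State) : Prop :=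
  IsEmptyState E ∧
  ∃ j₁ j₂, 0 < j₁ ∧ j₁ < j₂ ∧ InTE E j₂ ∧
    ruleOf (P^[j₁] E) = Rule.halve ∧ ruleOf (P^[j₂] E) = Rule.halve ∧
    ∀ t, 0 < t → t < j₂ → t ≠ j₁ → ruleOf (P^[t] E) = Rule.increment

/-- Embanked: the next empty state `N(E)` exists and the non-Increment rules of `T_E` consist
of exactly one Zero rule at the start and exactly two Halve rules elsewhere. -/
def Embanked (E : State) : Prop :=
  IsEmptyState E ∧
  ∃ m j₁ j₂, NextEmptyAt E m ∧ 0 < j₁ ∧ j₁ < j₂ ∧ j₂ < m ∧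
    ruleOf (P^[j₁] E) = Rule.halve ∧ ruleOf (P^[j₂] E) = Rule.halve ∧
    ∀ t, 0 < t → t < m → t ≠ j₁ → t ≠ j₂ → ruleOf (P^[t] E) = Rule.increment

/-- `h_i(E)` (`i ∈ {1,2}`): the value of `n` at the state immediately *after* the `i`-th
Halve rule applied after `E`. -/
noncomputable def hVal (E : State) (i : ℕ) : ℕ :=
  nOf (P^[Nat.nth (fun j => ruleOf (P^[j] E) = Rule.halve) (i - 1) + 1] E)

/-- `s_i(E)` (`i ∈ {1,2}`): the value of `n` at the state immediately *before* the `i`-th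
Halve rule applied after `E`. -/
noncomputable def sVal (E : State) (i : ℕ) : ℕ :=
  nOf (P^[Nat.nth (fun j => ruleOf (P^[j] E) = Rule.halve) (i - 1)] E)

/-- `E[i]` : the state `E` with the entry `a_i` replaced by `a_i + 2`. -/
def bump (E : State) (i : ℕ) : State := E.set i (E.getD i 0 + 2)

/-- `N'(E) = N^{⌈(i+1)/2⌉}(E)` for an embanked state `E` with `N(E) = E[i]`
(junk value `E` if no such `i` exists). -/
noncomputable def N' (E : State) : State :=
  if h : ∃ i, i < E.length ∧ N E = bump E i then N^[(h.choose + 2) / 2] E else E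

/-- A rooted embanked state: an embanked state obtained from `S_k` by applying `N'`
some number of times. -/
def RootedEmbanked (k : ℕ) (E : State) : Prop :=
  Embanked E ∧ ∃ e : ℕ, N'^[e] (Sk k) = E

/-- `κ_{E→E'}(j)` : the number of steps `S ↦ N(S)` with `N(S) = S[j]` along the chain
`E, N(E), N²(E), …, N^[t](E) = E'`. -/
noncomputable def kappa (E : State) (t j : ℕ) : ℕ :=
  ((Finset.range t).filter fun s => N (N^[s] E) = bump (N^[s] E) j).card


/-! ### Basic entry lemmas -/

@[simp] lemma entry_cons_zero (a : ℤ) (l : State) : entry (a :: l) 0 = a := rfl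
@[simp] lemma entry_cons_succ (a : ℤ) (l : State) (j : ℕ) : entry (a :: l) (j+1) = entry l j := rfl
@[simp] lemma entry_nil (i : ℕ) : entry ([] : State) i = 0 := by cases i <;> rfl

lemma headD_eq_entry (S : State) : S.headD 0 = entry S 0 := by cases S <;> rfl

lemma entry_eq_getElem (S : State) (i : ℕ) (h : i < S.length) : entry S i = S[i] :=
  List.getD_eq_getElem S 0 h

lemma entry_eq_zero_of_le (S : State) (i : ℕ) (h : S.length ≤ i) : entry S i = 0 := by
  simp [entry, List.getD_eq_getElem?_getD, List.getElem?_eq_none h]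

lemma entry_set (S : State) (n : ℕ) (a : ℤ) (m : ℕ) :
    entry (S.set n a) m = if n = m ∧ n < S.length then a else entry S m := by
  simp only [entry, List.getD_eq_getElem?_getD, List.getElem?_set]
  by_cases h1 : n = m
  · subst h1
    by_cases h2 : n < S.length
    · simp [h2]
    · simp [h2, entry, List.getD_eq_getElem?_getD, List.getElem?_eq_none (le_of_not_gt h2)]
  · simp [h1]

lemma entry_tail (S : State) (m : ℕ) : entry S.tail m = entry S (m+1) := by
  cases S with
  | nil => simp
  | cons a l => rfl

lemma entry_append (S T : State) (m : ℕ) :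
    entry (S ++ T) m = if m < S.length then entry S m else entry T (m - S.length) := by
  by_cases h : m < S.length
  · rw [if_pos h, entry_eq_getElem _ _ (by simp; omega), entry_eq_getElem _ _ h,
      List.getElem_append_left h]
  · rw [if_neg h]
    push_neg at h
    by_cases h2 : m < S.length + T.length
    · rw [entry_eq_getElem _ _ (by simp; omega), entry_eq_getElem _ _ (by omega),
        List.getElem_append_right h]
    · rw [entry_eq_zero_of_le _ _ (by simp; omega), entry_eq_zero_of_le _ _ (by omega)]

lemma leftmost_eq_entry (S : State) (h : S ≠ []) : leftmost S = entry S (S.length - 1) := by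
  unfold leftmost
  rw [List.getLastD_eq_getLast?, List.getLast?_eq_getElem?,
    entry, List.getD_eq_getElem?_getD]

lemma getLastD_one_eq_entry (S : State) (h : S ≠ []) : S.getLastD 1 = entry S (S.length - 1) := by
  rw [List.getLastD_eq_getLast?, List.getLast?_eq_getElem?, entry, List.getD_eq_getElem?_getD,
    List.getElem?_eq_getElem (Nat.sub_lt (List.length_pos_iff.2 h) one_pos)]
  simp

lemma forall_mem_iff (S : State) (Q : ℤ → Prop) :
    (∀ x ∈ S, Q x) ↔ ∀ i < S.length, Q (entry S i) := by
  constructor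
  · intro h i hi
    rw [entry_eq_getElem S i hi]
    exact h _ (S.getElem_mem hi)
  · intro h x hx
    obtain ⟨i, hi, rfl⟩ := List.mem_iff_getElem.1 hx
    rw [← entry_eq_getElem S i hi]
    exact h i hi

lemma mem_dropLast_iff (S : State) (x : ℤ) :
    x ∈ S.dropLast ↔ ∃ i, i < S.length - 1 ∧ entry S i = x := by
  rw [List.mem_iff_getElem]
  constructor
  · rintro ⟨i, hi, rfl⟩
    rw [List.length_dropLast] at hi
    exact ⟨i, hi, by rw [entry_eq_getElem S i (by omega), List.getElem_dropLast]⟩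
  · rintro ⟨i, hi, rfl⟩
    refine ⟨i, by simpa using hi, ?_⟩
    rw [entry_eq_getElem S i (by omega), List.getElem_dropLast]

lemma sum_eq_sum_entry (S : State) : S.sum = ∑ j ∈ Finset.range S.length, entry S j := by
  induction S with
  | nil => simp
  | cons a l ih =>
    rw [List.sum_cons, List.length_cons, Finset.sum_range_succ', ih]
    simp [add_comm]
/-! ### Suffix sums and bits -/

/-- Sum of the entries from index `m` (inclusive) up to the end. -/
def suf (S : State) (m : ℕ) : ℤ := ∑ j ∈ Finset.Ico m S.length, entry S j

/-- The `i`-th Gray-code bit of `n(S)`. -/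
def bitv (S : State) (i : ℕ) : ℕ := ((suf S (i+1)) % 2).toNat

lemma bitv_eq (S : State) (i : ℕ) : bitv S i = if Even (suf S (i+1)) then 0 else 1 := by
  unfold bitv
  rcases Int.even_or_odd (suf S (i+1)) with h | h
  · rw [if_pos h, Int.even_iff.1 h]; rfl
  · rw [if_neg (by simpa [Int.not_even_iff_odd] using h), Int.odd_iff.1 h]; rfl

lemma bitv_le_one (S : State) (i : ℕ) : bitv S i ≤ 1 := by
  rw [bitv_eq]; split <;> simp

lemma nOf_eq_sum (S : State) : nOf S = ∑ i ∈ Finset.range (ell S), 2 ^ i * bitv S i := by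
  unfold nOf
  refine Finset.sum_congr rfl fun i _ => ?_
  have : Finset.Icc (i+1) (ell S) = Finset.Ico (i+1) S.length := by
    ext x
    simp only [Finset.mem_Icc, Finset.mem_Ico, ell]
    omega
  rw [this]; rfl

lemma suf_eq_entry_add (S : State) (j : ℕ) (h : j < S.length) :
    suf S j = entry S j + suf S (j+1) := by
  unfold suf
  rw [Finset.sum_eq_sum_Ico_succ_bot h]

lemma suf_of_le (S : State) (j : ℕ) (h : S.length ≤ j) : suf S j = 0 := by
  unfold suf
  rw [Finset.Ico_eq_empty (by omega), Finset.sum_empty]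

lemma sum_eq_entry_add_suf (S : State) (h : S ≠ []) : S.sum = entry S 0 + suf S 1 := by
  have h0 : 0 < S.length := List.length_pos_iff.2 h
  rw [sum_eq_sum_entry, Finset.range_eq_Ico, Finset.sum_eq_sum_Ico_succ_bot h0]
  rfl

lemma suf_parity_single_odd (S : State) (m p : ℕ) (hp : p < S.length) (hmp : m ≤ p)
    (hodd : Odd (entry S p)) (heven : ∀ j, m ≤ j → j < S.length → j ≠ p → Even (entry S j)) :
    Odd (suf S m) := by
  have hmem : p ∈ Finset.Ico m S.length := by simp only [Finset.mem_Ico]; omega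
  rw [suf, ← Finset.sum_erase_add _ _ hmem]
  refine (Finset.even_sum _ ?_).add_odd hodd
  intro j hj
  rw [Finset.mem_erase, Finset.mem_Ico] at hj
  exact heven j hj.2.1 hj.2.2 hj.1

lemma suf_parity_all_even (S : State) (m : ℕ)
    (heven : ∀ j, m ≤ j → j < S.length → Even (entry S j)) : Even (suf S m) := by
  rw [suf]
  refine Finset.even_sum _ ?_
  intro j hj
  rw [Finset.mem_Ico] at hj
  exact heven j hj.1 hj.2

lemma nOf_eq_zero_iff (S : State) : nOf S = 0 ↔ ∀ i < ell S, bitv S i = 0 := by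
  rw [nOf_eq_sum, Finset.sum_eq_zero_iff]
  constructor
  · intro h i hi
    have := h i (Finset.mem_range.2 hi)
    have h2 : (2:ℕ)^i ≠ 0 := by positivity
    exact (Nat.mul_eq_zero.1 this).resolve_left h2
  · intro h i hi
    rw [h i (Finset.mem_range.1 hi), mul_zero]

lemma even_suf_of_nOf_zero (S : State) (h : nOf S = 0) (m : ℕ) (hm : 1 ≤ m) :
    Even (suf S m) := by
  by_cases hL : m < S.length
  · have hb := (nOf_eq_zero_iff S).1 h (m-1) (by unfold ell; omega)
    rw [bitv_eq] at hb
    have hmm : m - 1 + 1 = m := by omega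
    rw [hmm] at hb
    by_contra hc
    rw [if_neg hc] at hb
    exact one_ne_zero hb
  · rw [suf_of_le S m (by omega)]
    exact Even.zero

lemma even_entry_of_nOf_zero (S : State) (h : nOf S = 0) (i : ℕ) (hi : 1 ≤ i) :
    Even (entry S i) := by
  by_cases hL : i < S.length
  · have h1 := even_suf_of_nOf_zero S h i hi
    have h2 := even_suf_of_nOf_zero S h (i+1) (by omega)
    have h3 := suf_eq_entry_add S i hL
    have : entry S i = suf S i - suf S (i+1) := by linarith
    rw [this]
    exact h1.sub h2
  · rw [entry_eq_zero_of_le _ _ (by omega)]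
    exact Even.zero

lemma allEven_iff (S : State) : (∀ x ∈ S, Even x) ↔ nOf S = 0 ∧ Even (entry S 0) := by
  rw [forall_mem_iff]
  constructor
  · intro h
    constructor
    · rw [nOf_eq_zero_iff]
      intro i hi
      rw [bitv_eq, if_pos]
      exact suf_parity_all_even S (i+1) fun j hj hjL => h j hjL
    · by_cases h0 : 0 < S.length
      · exact h 0 h0
      · rw [entry_eq_zero_of_le _ _ (by omega)]; exact Even.zero
  · rintro ⟨h1, h2⟩ i hi
    rcases Nat.eq_zero_or_pos i with rfl | hpos
    · exact h2
    · exact even_entry_of_nOf_zero S h1 i hpos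

lemma sum_two_pow (n : ℕ) : ∑ i ∈ Finset.range n, 2 ^ i = 2 ^ n - 1 := by
  induction n with
  | zero => simp
  | succ n ih =>
    rw [Finset.sum_range_succ, ih]
    have : 1 ≤ 2 ^ n := Nat.one_le_two_pow
    rw [pow_succ]
    omega

lemma nOf_eq_max_iff (S : State) : nOf S = 2 ^ (ell S) - 1 ↔ ∀ i < ell S, bitv S i = 1 := by
  constructor
  · intro h
    by_contra hc
    push_neg at hc
    obtain ⟨i, hi, hne⟩ := hc
    have hb0 : bitv S i = 0 := by have := bitv_le_one S i; omega
    have hlt : nOf S < 2 ^ ell S - 1 := by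
      rw [nOf_eq_sum, ← sum_two_pow]
      refine Finset.sum_lt_sum (fun j _ => ?_) ⟨i, Finset.mem_range.2 hi, ?_⟩
      · have := bitv_le_one S j
        calc 2^j * bitv S j ≤ 2^j * 1 := Nat.mul_le_mul_left _ this
          _ = 2^j := by ring
      · rw [hb0, mul_zero]
        positivity
    omega
  · intro h
    rw [nOf_eq_sum, ← sum_two_pow]
    refine Finset.sum_congr rfl fun i hi => ?_
    rw [h i (Finset.mem_range.1 hi), mul_one]

lemma odd_suf_of_nOf_max (S : State) (h : nOf S = 2 ^ ell S - 1) (m : ℕ)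
    (hm1 : 1 ≤ m) (hm2 : m ≤ ell S) : Odd (suf S m) := by
  have hb := (nOf_eq_max_iff S).1 h (m-1) (by omega)
  rw [bitv_eq] at hb
  have hmm : m - 1 + 1 = m := by omega
  rw [hmm] at hb
  by_contra hc
  rw [Int.not_odd_iff_even] at hc
  rw [if_pos hc] at hb
  exact zero_ne_one hb

lemma overflowCond_iff (S : State) (h2 : 2 ≤ S.length) :
    OverflowCond S ↔ nOf S = 2 ^ ell S - 1 ∧ Even (entry S 0) := by
  have hne : S ≠ [] := by intro h; rw [h] at h2; simp at h2
  have hell : ell S = S.length - 1 := rfl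
  constructor
  · rintro ⟨hodd, hdl⟩
    rw [leftmost_eq_entry S hne] at hodd
    have hdl' : ∀ i, i < S.length - 1 → Even (entry S i) := by
      intro i hi
      exact hdl _ ((mem_dropLast_iff S _).2 ⟨i, hi, rfl⟩)
    constructor
    · rw [nOf_eq_max_iff]
      intro i hi
      rw [bitv_eq, if_neg]
      rw [Int.not_even_iff_odd]
      refine suf_parity_single_odd S (i+1) (S.length - 1) (by omega) (by omega) hodd ?_
      intro j _ hjL hjne
      exact hdl' j (by omega)
    · exact hdl' 0 (by omega)
  · rintro ⟨hmax, hev⟩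
    have hsufodd : ∀ m, 1 ≤ m → m ≤ S.length - 1 → Odd (suf S m) :=
      fun m a b => odd_suf_of_nOf_max S hmax m a (by omega)
    have hmid : ∀ j, 1 ≤ j → j < S.length - 1 → Even (entry S j) := by
      intro j h1 hj
      have ha := hsufodd j h1 (by omega)
      have hb := hsufodd (j+1) (by omega) (by omega)
      have h3 := suf_eq_entry_add S j (by omega)
      have : entry S j = suf S j - suf S (j+1) := by linarith
      rw [this]
      exact ha.sub_odd hb
    constructor
    · rw [leftmost_eq_entry S hne]
      have ha := hsufodd (S.length - 1) (by omega) le_rfl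
      have h3 := suf_eq_entry_add S (S.length - 1) (by omega)
      rw [suf_of_le S (S.length - 1 + 1) (by omega)] at h3
      have : entry S (S.length - 1) = suf S (S.length - 1) := by linarith
      rw [this]
      exact ha
    · intro x hx
      obtain ⟨i, hi, rfl⟩ := (mem_dropLast_iff S x).1 hx
      rcases Nat.eq_zero_or_pos i with rfl | hpos
      · exact hev
      · exact hmid i hpos hi
/-! ### Rule determination and `P` computation -/

lemma entry_dropLast (S : State) (j : ℕ) :
    entry S.dropLast j = if j < S.length - 1 then entry S j else 0 := by
  by_cases h : j < S.length - 1
  · rw [if_pos h, entry_eq_getElem _ _ (by simpa using h), List.getElem_dropLast,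
      entry_eq_getElem _ _ (by omega)]
  · rw [if_neg h, entry_eq_zero_of_le _ _ (by simp; omega)]

lemma P_overflow (S : State) (h : ruleOf S = .overflow) :
    P S = S.dropLast ++ [leftmost S + 1, 0] := by
  unfold P; rw [h]

lemma P_halt (S : State) (h : ruleOf S = .halt) : P S = S := by
  unfold P; rw [h]

lemma P_zero (S : State) (h : ruleOf S = .zero) :
    P S = (S.set 0 (S.headD 0 - 1)).set (S.length - 1) (leftmost S + 1) ++ [0, 0] := by
  unfold P; rw [h]

lemma P_halve (S : State) (h : ruleOf S = .halve) : P S = S.tail := by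
  unfold P; rw [h]

lemma P_increment (S : State) (h : ruleOf S = .increment) :
    P S = (S.set (S.findIdx (fun x => x % 2 != 0) + 1)
      (S.getD (S.findIdx (fun x => x % 2 != 0) + 1) 0 + 1)).set 0 (S.headD 0 - 1) := by
  unfold P; rw [h]

lemma iterate_halt (S : State) (h : ruleOf S = .halt) (m : ℕ) : P^[m] S = S := by
  induction m with
  | zero => rfl
  | succ m ih => rw [Function.iterate_succ_apply, P_halt S h, ih]

lemma ruleOf_cases (S : State) :
    (ruleOf S = .overflow ∧ OverflowCond S) ∨ (ruleOf S = .halt ∧ HaltCond S) ∨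
    (ruleOf S = .zero ∧ ZeroCond S) ∨
    (ruleOf S = .halve ∧ S.headD 0 = -1 ∧ ¬ OverflowCond S ∧ ¬ HaltCond S ∧ ¬ ZeroCond S) ∨
    (ruleOf S = .increment ∧ ¬ OverflowCond S ∧ ¬ HaltCond S ∧ ¬ ZeroCond S ∧
      S.headD 0 ≠ -1) := by
  unfold ruleOf
  split_ifs with h1 h2 h3 h4 <;> tauto

lemma not_allEven_of_increment (S : State) (h : ruleOf S = .increment) :
    ¬ ∀ x ∈ S, Even x := by
  rcases ruleOf_cases S with ⟨h', _⟩ | ⟨h', _⟩ | ⟨h', _⟩ | ⟨h', _⟩ | ⟨_, _, hh, hz, _⟩ <;>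
    first
    | (rw [h] at h'; exact absurd h' (by simp))
    | exact fun hev => (em (HaltCond S)).elim hh fun hnh => hz ⟨hev, hnh⟩

lemma conds_of_increment (S : State) (h : ruleOf S = .increment) :
    ¬ OverflowCond S ∧ ¬ HaltCond S ∧ ¬ ZeroCond S ∧ S.headD 0 ≠ -1 := by
  rcases ruleOf_cases S with ⟨h', _⟩ | ⟨h', _⟩ | ⟨h', _⟩ | ⟨h', _⟩ | ⟨_, h2⟩ <;>
    first
    | (rw [h] at h'; exact absurd h' (by simp))
    | exact h2

lemma ruleOf_increment (S : State) (h2 : 2 ≤ S.length) (h0 : 0 ≤ entry S 0)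
    (hn : nOf S ≠ 0 ∨ Odd (entry S 0)) (hx : nOf S ≠ 2 ^ ell S - 1 ∨ Odd (entry S 0)) :
    ruleOf S = .increment := by
  have hnov : ¬ OverflowCond S := by
    intro hov
    rw [overflowCond_iff S h2] at hov
    rcases hx with hx | hx
    · exact hx hov.1
    · exact (Int.not_odd_iff_even.2 hov.2) hx
  have hnev : ¬ ∀ x ∈ S, Even x := by
    intro hev
    rw [allEven_iff] at hev
    rcases hn with hn | hn
    · exact hn hev.1
    · exact (Int.not_odd_iff_even.2 hev.2) hn
  have hnha : ¬ HaltCond S := fun h => hnev h.1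
  have hnz : ¬ ZeroCond S := fun h => hnev h.1
  unfold ruleOf
  rw [if_neg hnov, if_neg hnha, if_neg hnz, if_neg]
  rw [headD_eq_entry]
  omega

lemma ruleOf_halve (S : State) (h2 : 2 ≤ S.length) (h0 : entry S 0 = -1) :
    ruleOf S = .halve := by
  have hodd : Odd (entry S 0) := by rw [h0]; exact ⟨-1, by ring⟩
  have hnov : ¬ OverflowCond S := by
    intro hov
    rw [overflowCond_iff S h2] at hov
    exact (Int.not_odd_iff_even.2 hov.2) hodd
  have hnev : ¬ ∀ x ∈ S, Even x := by
    intro hev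
    rw [allEven_iff] at hev
    exact (Int.not_odd_iff_even.2 hev.2) hodd
  have hnha : ¬ HaltCond S := fun h => hnev h.1
  have hnz : ¬ ZeroCond S := fun h => hnev h.1
  unfold ruleOf
  rw [if_neg hnov, if_neg hnha, if_neg hnz, if_pos (by rw [headD_eq_entry]; exact h0)]

lemma ruleOf_allEven (S : State) (h : ∀ x ∈ S, Even x) :
    ruleOf S = .halt ∨ ruleOf S = .zero := by
  have hnov : ¬ OverflowCond S := by
    rintro ⟨hodd, -⟩
    rcases List.eq_nil_or_concat S with rfl | ⟨l, a, rfl⟩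
    · exact (by simp : ¬ Odd (0:ℤ)) (by simpa [leftmost] using hodd)
    · have hev : Even a := h a (by simp)
      rw [List.concat_eq_append] at hodd
      unfold leftmost at hodd
      rw [List.getLastD_concat] at hodd
      exact (Int.not_odd_iff_even.2 hev) hodd
  unfold ruleOf
  rw [if_neg hnov]
  by_cases hh : HaltCond S
  · rw [if_pos hh]; left; rfl
  · rw [if_neg hh, if_pos ⟨h, hh⟩]; right; rfl

lemma ruleOf_overflow (S : State) (h2 : 2 ≤ S.length) (hn : nOf S = 2 ^ ell S - 1)
    (he : Even (entry S 0)) : ruleOf S = .overflow := by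
  unfold ruleOf
  rw [if_pos ((overflowCond_iff S h2).2 ⟨hn, he⟩)]
/-! ### Step lemmas -/

lemma increment_step (S : State) (h : ruleOf S = .increment) :
    (P S).length = S.length ∧ (P S).sum = S.sum ∧
    entry (P S) 0 = entry S 0 - 1 ∧
    entry (P S) 1 = entry S 1 + (if Odd (entry S 0) then 1 else 0) ∧
    (Odd S.sum → nOf (P S) = nOf S + 1) ∧
    (¬ Odd S.sum → 1 ≤ nOf S ∧ nOf (P S) = nOf S - 1) := by
  obtain ⟨hnov, hnha, hnz, hhd⟩ := conds_of_increment S h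
  have hnev := not_allEven_of_increment S h
  have hSne : S ≠ [] := by rintro rfl; exact hnev (by simp)
  have hL2 : 2 ≤ S.length := by
    rcases S with _ | ⟨a, _ | ⟨b, l⟩⟩
    · exact absurd rfl hSne
    · exfalso
      have ha : ¬ Even a := by
        intro hev
        exact hnev (by intro x hx; rcases List.mem_singleton.1 hx with rfl; exact hev)
      exact hnov ⟨by simpa [leftmost, Int.not_even_iff_odd] using ha, by simp⟩
    · simp
  have hex : ∃ x ∈ S, (fun x : ℤ => x % 2 != 0) x = true := by
    by_contra hc
    push_neg at hc
    refine hnev fun x hx => ?_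
    have h1 := hc x hx
    simp only [bne_iff_ne, ne_eq, not_not] at h1
    rw [Int.even_iff]
    simpa using h1
  set i := S.findIdx (fun x : ℤ => x % 2 != 0) with hidef
  have hiL : i < S.length := List.findIdx_lt_length.2 hex
  have hoddi : Odd (entry S i) := by
    have h1 := List.findIdx_getElem (p := fun x : ℤ => x % 2 != 0) (xs := S) (w := hiL)
    rw [entry_eq_getElem S i hiL, Int.odd_iff]
    have h3 : ¬ (S[i] % 2 = 0) := by simpa using h1
    rcases Int.emod_two_eq (S[i]) with h2 | h2
    · exact absurd h2 h3
    · exact h2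
  have hevenj : ∀ j, j < i → Even (entry S j) := by
    intro j hj
    have hjL : j < S.length := lt_trans hj hiL
    have h1 := List.not_of_lt_findIdx (p := fun x : ℤ => x % 2 != 0) (xs := S) hj
    rw [entry_eq_getElem S j hjL, Int.even_iff]
    simpa using h1
  have hiell : i < ell S := by
    by_contra hc
    push_neg at hc
    have hieq : i = S.length - 1 := by unfold ell at hc; omega
    refine hnov ⟨?_, ?_⟩
    · rw [leftmost_eq_entry S hSne, ← hieq]; exact hoddi
    · intro x hx
      obtain ⟨j, hj, rfl⟩ := (mem_dropLast_iff S x).1 hx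
      exact hevenj j (by omega)
  have hi1L : i + 1 < S.length := by unfold ell at hiell; omega
  have hP : P S = (S.set (i+1) (entry S (i+1) + 1)).set 0 (entry S 0 - 1) := by
    rw [P_increment S h, headD_eq_entry]
    rfl
  have hlen : (P S).length = S.length := by rw [hP]; simp
  have hEntry : ∀ m, entry (P S) m =
      if m = 0 then entry S 0 - 1 else if m = i+1 then entry S (i+1) + 1 else entry S m := by
    intro m
    rw [hP, entry_set, entry_set, List.length_set]
    by_cases hm0 : m = 0
    · subst hm0
      have c1 : ((0:ℕ) = 0 ∧ 0 < S.length) := ⟨rfl, by omega⟩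
      rw [if_pos c1, if_pos rfl]
    · have c1 : ¬((0:ℕ) = m ∧ 0 < S.length) := fun hc => hm0 hc.1.symm
      rw [if_neg c1, if_neg hm0]
      by_cases hmi : m = i + 1
      · subst hmi
        have c2 : (i + 1 = i + 1 ∧ i + 1 < S.length) := ⟨rfl, hi1L⟩
        rw [if_pos c2, if_pos rfl]
      · have c2 : ¬(i + 1 = m ∧ i + 1 < S.length) := fun hc => hmi hc.1.symm
        rw [if_neg c2, if_neg hmi]
  have hsum : (P S).sum = S.sum := by
    rw [sum_eq_sum_entry, sum_eq_sum_entry, hlen]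
    have hpt : ∀ m ∈ Finset.range S.length, entry (P S) m
        = entry S m + ((if m = 0 then (-1:ℤ) else 0) + (if m = i+1 then (1:ℤ) else 0)) := by
      intro m _
      rw [hEntry m]
      by_cases h1 : m = 0
      · subst h1
        rw [if_pos rfl, if_pos rfl, if_neg (by omega : ¬(0:ℕ) = i+1)]
        ring
      · rw [if_neg h1, if_neg h1]
        by_cases h2 : m = i + 1
        · subst h2
          rw [if_pos rfl, if_pos rfl]
          ring
        · rw [if_neg h2, if_neg h2]
          ring
    have c0 : (0:ℕ) ∈ Finset.range S.length := Finset.mem_range.2 (by omega)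
    have ci : i + 1 ∈ Finset.range S.length := Finset.mem_range.2 hi1L
    rw [Finset.sum_congr rfl hpt, Finset.sum_add_distrib, Finset.sum_add_distrib,
      Finset.sum_ite_eq' (Finset.range S.length) 0 (fun _ => (-1:ℤ)),
      Finset.sum_ite_eq' (Finset.range S.length) (i+1) (fun _ => (1:ℤ)),
      if_pos c0, if_pos ci]
    ring
  have hsuf : ∀ m, 1 ≤ m → suf (P S) m = suf S m + (if m ≤ i + 1 then 1 else 0) := by
    intro m hm
    unfold suf
    rw [hlen]
    have hpt : ∀ j ∈ Finset.Ico m S.length,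
        entry (P S) j = entry S j + (if j = i+1 then (1:ℤ) else 0) := by
      intro j hj
      rw [Finset.mem_Ico] at hj
      rw [hEntry j, if_neg (by omega : ¬ j = 0)]
      by_cases h2 : j = i + 1
      · subst h2
        rw [if_pos rfl, if_pos rfl]
      · rw [if_neg h2, if_neg h2, add_zero]
    rw [Finset.sum_congr rfl hpt, Finset.sum_add_distrib,
      Finset.sum_ite_eq' (Finset.Ico m S.length) (i+1) (fun _ => (1:ℤ))]
    congr 1
    by_cases hmi : m ≤ i + 1
    · rw [if_pos (Finset.mem_Ico.2 ⟨hmi, hi1L⟩), if_pos hmi]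
    · rw [if_neg (fun hc => hmi (Finset.mem_Ico.1 hc).1), if_neg hmi]
  have hbflip : ∀ m, m ≤ i → bitv (P S) m = 1 - bitv S m := by
    intro m hm
    rw [bitv_eq, bitv_eq, hsuf (m+1) (by omega), if_pos (by omega : m + 1 ≤ i + 1)]
    simp only [Int.even_add_one]
    by_cases he : Even (suf S (m+1))
    · rw [if_neg (not_not_intro he), if_pos he]
    · rw [if_pos he, if_neg he]
  have hbkeep : ∀ m, i < m → bitv (P S) m = bitv S m := by
    intro m hm
    rw [bitv_eq, bitv_eq, hsuf (m+1) (by omega), if_neg (by omega : ¬ m + 1 ≤ i + 1), add_zero]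
  have hlow : ∀ m, m < i → bitv S m = 1 - bitv S i := by
    intro m hm
    have hsplit : suf S (m+1) = (∑ j ∈ Finset.Ico (m+1) (i+1), entry S j) + suf S (i+1) := by
      unfold suf
      rw [Finset.sum_Ico_consecutive _ (by omega) (by omega)]
    have hmem : i ∈ Finset.Ico (m+1) (i+1) := by rw [Finset.mem_Ico]; omega
    have hmid : Odd (∑ j ∈ Finset.Ico (m+1) (i+1), entry S j) := by
      rw [← Finset.sum_erase_add _ _ hmem]
      refine (Finset.even_sum _ ?_).add_odd hoddi
      intro j hj
      rw [Finset.mem_erase, Finset.mem_Ico] at hj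
      exact hevenj j (by omega)
    rw [bitv_eq, bitv_eq, hsplit]
    by_cases he : Even (suf S (i+1))
    · rw [if_neg (Int.not_even_iff_odd.2 (hmid.add_even he)), if_pos he]
    · rw [if_pos (hmid.add_odd (Int.not_even_iff_odd.1 he)), if_neg he]
  have hsumpar : Odd S.sum ↔ bitv S i = 0 := by
    have hdec : S.sum = ((∑ j ∈ Finset.Ico 0 i, entry S j) + entry S i) + suf S (i+1) := by
      rw [sum_eq_sum_entry, Finset.range_eq_Ico,
        ← Finset.sum_Ico_consecutive _ (by omega : (0:ℕ) ≤ i) (le_of_lt hiL),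
        Finset.sum_eq_sum_Ico_succ_bot hiL]
      rw [suf]
      ring
    have heven0 : Even (∑ j ∈ Finset.Ico 0 i, entry S j) :=
      Finset.even_sum _ fun j hj => hevenj j (Finset.mem_Ico.1 hj).2
    rw [hdec, bitv_eq]
    by_cases he : Even (suf S (i+1))
    · rw [if_pos he]
      exact iff_of_true ((heven0.add_odd hoddi).add_even he) rfl
    · rw [if_neg he]
      exact iff_of_false
        (Int.not_odd_iff_even.2 ((heven0.add_odd hoddi).add_odd (Int.not_even_iff_odd.1 he)))
        one_ne_zero
  have hellP : ell (P S) = ell S := by unfold ell; rw [hlen]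
  have hsplitn : ∀ T : State, ell T = ell S →
      nOf T = ((∑ m ∈ Finset.range i, 2^m * bitv T m) + 2^i * bitv T i)
        + ∑ m ∈ Finset.Ico (i+1) (ell S), 2^m * bitv T m := by
    intro T hT
    rw [nOf_eq_sum, hT, Finset.range_eq_Ico,
      ← Finset.sum_Ico_consecutive _ (by omega : (0:ℕ) ≤ i+1) (by omega : i+1 ≤ ell S),
      ← Finset.range_eq_Ico, Finset.sum_range_succ]
  have hRkeep : ∑ m ∈ Finset.Ico (i+1) (ell S), 2^m * bitv (P S) m
      = ∑ m ∈ Finset.Ico (i+1) (ell S), 2^m * bitv S m :=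
    Finset.sum_congr rfl fun m hm => by rw [hbkeep m (by have := (Finset.mem_Ico.1 hm).1; omega)]
  have hnS := hsplitn S rfl
  have hnP := hsplitn (P S) hellP
  rw [hRkeep] at hnP
  have h2ipos : 1 ≤ 2^i := Nat.one_le_two_pow
  have hB : bitv S i = 0 ∨ bitv S i = 1 := by have := bitv_le_one S i; omega
  have hnOf : (Odd S.sum → nOf (P S) = nOf S + 1) ∧
      (¬ Odd S.sum → 1 ≤ nOf S ∧ nOf (P S) = nOf S - 1) := by
    rcases hB with hB | hB
    · have hlowS : ∑ m ∈ Finset.range i, 2^m * bitv S m = 2^i - 1 := by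
        rw [← sum_two_pow]
        refine Finset.sum_congr rfl fun m hm => ?_
        rw [hlow m (Finset.mem_range.1 hm), hB]
        simp
      have hlowP : ∑ m ∈ Finset.range i, 2^m * bitv (P S) m = 0 := by
        refine Finset.sum_eq_zero fun m hm => ?_
        rw [hbflip m (le_of_lt (Finset.mem_range.1 hm)), hlow m (Finset.mem_range.1 hm), hB]
        simp
      have hbi : bitv (P S) i = 1 := by rw [hbflip i le_rfl, hB]
      rw [hlowS, hB] at hnS
      rw [hlowP, hbi] at hnP
      constructor
      · intro _; omega
      · intro hns; exact absurd (hsumpar.2 hB) hns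
    · have hlowS : ∑ m ∈ Finset.range i, 2^m * bitv S m = 0 := by
        refine Finset.sum_eq_zero fun m hm => ?_
        rw [hlow m (Finset.mem_range.1 hm), hB]
        simp
      have hlowP : ∑ m ∈ Finset.range i, 2^m * bitv (P S) m = 2^i - 1 := by
        rw [← sum_two_pow]
        refine Finset.sum_congr rfl fun m hm => ?_
        rw [hbflip m (le_of_lt (Finset.mem_range.1 hm)), hlow m (Finset.mem_range.1 hm), hB]
        simp
      have hbi : bitv (P S) i = 0 := by rw [hbflip i le_rfl, hB]
      rw [hlowS, hB] at hnS
      rw [hlowP, hbi] at hnP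
      constructor
      · intro hod
        rw [hsumpar] at hod
        omega
      · intro _
        constructor <;> omega
  have hi0iff : i = 0 ↔ Odd (entry S 0) := by
    constructor
    · intro hie; exact hie ▸ hoddi
    · intro ho
      by_contra hne
      exact (Int.not_odd_iff_even.2 (hevenj 0 (by omega))) ho
  refine ⟨hlen, hsum, ?_, ?_, hnOf.1, hnOf.2⟩
  · rw [hEntry 0, if_pos rfl]
  · rw [hEntry 1]
    by_cases h1 : Odd (entry S 0)
    · have : i = 0 := hi0iff.2 h1
      rw [if_neg one_ne_zero, if_pos (by omega), if_pos h1, this]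
    · have : i ≠ 0 := fun hc => h1 (hi0iff.1 hc)
      rw [if_neg one_ne_zero, if_neg (by omega), if_neg h1, add_zero]

lemma suf_tail (S : State) (m : ℕ) : suf S.tail m = suf S (m+1) := by
  unfold suf
  rw [List.length_tail,
    show (∑ j ∈ Finset.Ico m (S.length - 1), entry S.tail j)
      = ∑ j ∈ Finset.Ico m (S.length - 1), entry S (j+1) from
      Finset.sum_congr rfl fun j _ => entry_tail S j,
    Finset.sum_Ico_eq_sum_range, Finset.sum_Ico_eq_sum_range,
    show S.length - 1 - m = S.length - (m+1) by omega]
  exact Finset.sum_congr rfl fun r _ => by congr 1; omega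

lemma bitv_tail (S : State) (m : ℕ) : bitv S.tail m = bitv S (m+1) := by
  unfold bitv
  rw [suf_tail]

lemma nOf_tail (S : State) (h2 : 2 ≤ S.length) : nOf S.tail = nOf S / 2 := by
  have hkey : nOf S = bitv S 0 + 2 * nOf S.tail := by
    rw [nOf_eq_sum, nOf_eq_sum,
      show ell S = (ell S.tail) + 1 by unfold ell; rw [List.length_tail]; omega,
      Finset.sum_range_succ', pow_zero, one_mul, Finset.mul_sum, add_comm]
    congr 1
    refine Finset.sum_congr rfl fun m _ => ?_
    rw [bitv_tail, pow_succ]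
    ring
  have := bitv_le_one S 0
  omega

lemma sum_tail (S : State) (h : S ≠ []) : S.tail.sum = S.sum - entry S 0 := by
  rcases S with _ | ⟨a, l⟩
  · exact absurd rfl h
  · simp [List.sum_cons]

lemma halve_step (S : State) (h2 : 2 ≤ S.length) (hm : entry S 0 = -1) :
    (S.tail).length = S.length - 1 ∧ (S.tail).sum = S.sum + 1 ∧
    (∀ m, entry S.tail m = entry S (m+1)) ∧ nOf S.tail = nOf S / 2 := by
  have hSne : S ≠ [] := by intro hc; rw [hc] at h2; simp at h2
  refine ⟨List.length_tail, ?_, entry_tail S, nOf_tail S h2⟩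
  rw [sum_tail S hSne, hm]
  ring
/-! ### The Zero step -/

lemma entry_pair (x y : ℤ) (j : ℕ) :
    entry ([x, y] : State) j = if j = 0 then x else if j = 1 then y else 0 := by
  rcases j with _ | _ | j <;> simp

lemma zero_step (S : State) (h4 : 4 ≤ S.length) (hn : nOf S = 0) (hr : ruleOf S = .zero) :
    (P S).length = S.length + 2 ∧ (P S).sum = S.sum ∧
    entry (P S) 0 = entry S 0 - 1 ∧ entry (P S) 1 = entry S 1 ∧
    nOf (P S) = 2 ^ (S.length - 1) - 1 := by
  have hSne : S ≠ [] := by intro hc; rw [hc] at h4; simp at h4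
  have hPd := P_zero S hr
  rw [headD_eq_entry, leftmost_eq_entry S hSne] at hPd
  have hlen : (P S).length = S.length + 2 := by rw [hPd]; simp
  have hEntry : ∀ m, entry (P S) m =
      if m = 0 then entry S 0 - 1
      else if m = S.length - 1 then entry S (S.length - 1) + 1
      else if m < S.length then entry S m else 0 := by
    intro m
    rw [hPd, entry_append, entry_set, entry_set, List.length_set, List.length_set]
    by_cases hm0 : m = 0
    · subst hm0
      have c1 : ¬(S.length - 1 = 0 ∧ S.length - 1 < S.length) := fun hc => by omega
      have c2 : ((0:ℕ) = 0 ∧ 0 < S.length) := ⟨rfl, by omega⟩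
      rw [if_pos (by omega : (0:ℕ) < S.length), if_neg c1, if_pos c2, if_pos rfl]
    · rw [if_neg hm0]
      by_cases hmL : m = S.length - 1
      · subst hmL
        have c1 : (S.length - 1 = S.length - 1 ∧ S.length - 1 < S.length) := ⟨rfl, by omega⟩
        rw [if_pos (by omega : S.length - 1 < S.length), if_pos c1, if_pos rfl]
      · rw [if_neg hmL]
        by_cases hmin : m < S.length
        · have c1 : ¬(S.length - 1 = m ∧ S.length - 1 < S.length) := fun hc => hmL hc.1.symm
          have c2 : ¬((0:ℕ) = m ∧ 0 < S.length) := fun hc => hm0 hc.1.symm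
          rw [if_pos hmin, if_neg c1, if_neg c2, if_pos hmin]
        · rw [if_neg hmin, if_neg hmin, entry_pair]
          split_ifs <;> rfl
  have hsum : (P S).sum = S.sum := by
    rw [sum_eq_sum_entry, sum_eq_sum_entry, hlen, Finset.sum_range_succ, Finset.sum_range_succ,
      hEntry (S.length + 1), hEntry S.length]
    rw [if_neg (by omega : ¬ S.length + 1 = 0), if_neg (by omega : ¬ S.length + 1 = S.length - 1),
      if_neg (by omega : ¬ S.length + 1 < S.length),
      if_neg (by omega : ¬ S.length = 0), if_neg (by omega : ¬ S.length = S.length - 1),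
      if_neg (by omega : ¬ S.length < S.length)]
    have hpt : ∀ m ∈ Finset.range S.length, entry (P S) m
        = entry S m + ((if m = 0 then (-1:ℤ) else 0) + (if m = S.length - 1 then (1:ℤ) else 0)) := by
      intro m hm
      rw [Finset.mem_range] at hm
      rw [hEntry m]
      by_cases h1 : m = 0
      · subst h1
        rw [if_pos rfl, if_pos rfl, if_neg (by omega : ¬(0:ℕ) = S.length - 1)]
        ring
      · rw [if_neg h1, if_neg h1]
        by_cases h2 : m = S.length - 1
        · subst h2
          rw [if_pos rfl, if_pos rfl]
          ring
        · rw [if_neg h2, if_neg h2, if_pos hm]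
          ring
    have c0 : (0:ℕ) ∈ Finset.range S.length := Finset.mem_range.2 (by omega)
    have ci : S.length - 1 ∈ Finset.range S.length := Finset.mem_range.2 (by omega)
    rw [Finset.sum_congr rfl hpt, Finset.sum_add_distrib, Finset.sum_add_distrib,
      Finset.sum_ite_eq' (Finset.range S.length) 0 (fun _ => (-1:ℤ)),
      Finset.sum_ite_eq' (Finset.range S.length) (S.length - 1) (fun _ => (1:ℤ)),
      if_pos c0, if_pos ci]
    ring
  have hevens : ∀ j, 1 ≤ j → Even (entry S j) := fun j hj => even_entry_of_nOf_zero S hn j hj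
  have hbit : ∀ m, bitv (P S) m = if m < S.length - 1 then 1 else 0 := by
    intro m
    rw [bitv_eq]
    by_cases hm : m < S.length - 1
    · rw [if_pos hm]
      have hodds : Odd (suf (P S) (m+1)) := by
        refine suf_parity_single_odd (P S) (m+1) (S.length - 1) (by rw [hlen]; omega)
          (by omega) ?_ ?_
        · rw [hEntry (S.length - 1), if_neg (by omega : ¬ S.length - 1 = 0), if_pos rfl]
          exact (hevens (S.length - 1) (by omega)).add_one
        · intro j hj1 hj2 hjne
          rw [hlen] at hj2
          rw [hEntry j, if_neg (by omega : ¬ j = 0), if_neg hjne]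
          by_cases hjL : j < S.length
          · rw [if_pos hjL]
            exact hevens j (by omega)
          · rw [if_neg hjL]
            exact Even.zero
      rw [if_neg (Int.not_even_iff_odd.mpr hodds)]
    · rw [if_neg hm]
      have hevs : Even (suf (P S) (m+1)) := by
        refine suf_parity_all_even (P S) (m+1) ?_
        intro j hj1 hj2
        rw [hlen] at hj2
        rw [hEntry j, if_neg (by omega : ¬ j = 0), if_neg (by omega : ¬ j = S.length - 1)]
        by_cases hjL : j < S.length
        · rw [if_pos hjL]
          exact hevens j (by omega)
        · rw [if_neg hjL]
          exact Even.zero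
      rw [if_pos hevs]
  have hellP : ell (P S) = S.length + 1 := by unfold ell; rw [hlen]; omega
  refine ⟨hlen, hsum, ?_, ?_, ?_⟩
  · rw [hEntry 0, if_pos rfl]
  · rw [hEntry 1, if_neg (by omega : ¬(1:ℕ) = 0), if_neg (by omega : ¬(1:ℕ) = S.length - 1),
      if_pos (by omega : 1 < S.length)]
  · rw [nOf_eq_sum, hellP]
    have hsplit : (∑ m ∈ Finset.range (S.length+1), 2^m * bitv (P S) m)
        = (∑ m ∈ Finset.Ico 0 (S.length - 1), 2^m * bitv (P S) m)
          + ∑ m ∈ Finset.Ico (S.length - 1) (S.length + 1), 2^m * bitv (P S) m := by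
      rw [Finset.range_eq_Ico, ← Finset.sum_Ico_consecutive _
        (by omega : (0:ℕ) ≤ S.length - 1) (by omega : S.length - 1 ≤ S.length + 1)]
    rw [hsplit]
    have h1 : ∑ m ∈ Finset.Ico 0 (S.length - 1), 2^m * bitv (P S) m = 2^(S.length-1) - 1 := by
      rw [← Finset.range_eq_Ico, ← sum_two_pow]
      refine Finset.sum_congr rfl fun m hm => ?_
      rw [hbit m, if_pos (Finset.mem_range.1 hm)]
      simp
    have h2 : ∑ m ∈ Finset.Ico (S.length - 1) (S.length + 1), 2^m * bitv (P S) m = 0 := by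
      refine Finset.sum_eq_zero fun m hm => ?_
      rw [Finset.mem_Ico] at hm
      rw [hbit m, if_neg (by omega : ¬ m < S.length - 1)]
      simp
    rw [h1, h2]
    omega
/-! ### Nonnegativity invariant -/

def Inv (S : State) : Prop := (-1 ≤ entry S 0) ∧ ∀ i : ℕ, 0 ≤ entry S (i+1)

lemma entry_P_zero (S : State) (h2 : 2 ≤ S.length) (hr : ruleOf S = .zero) (m : ℕ) :
    entry (P S) m = if m = 0 then entry S 0 - 1
      else if m = S.length - 1 then entry S (S.length - 1) + 1
      else if m < S.length then entry S m else 0 := by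
  have hSne : S ≠ [] := by intro hc; rw [hc] at h2; simp at h2
  have hPd := P_zero S hr
  rw [headD_eq_entry, leftmost_eq_entry S hSne] at hPd
  rw [hPd, entry_append, entry_set, entry_set, List.length_set, List.length_set]
  by_cases hm0 : m = 0
  · subst hm0
    have c1 : ¬(S.length - 1 = 0 ∧ S.length - 1 < S.length) := fun hc => by omega
    have c2 : ((0:ℕ) = 0 ∧ 0 < S.length) := ⟨rfl, by omega⟩
    rw [if_pos (by omega : (0:ℕ) < S.length), if_neg c1, if_pos c2, if_pos rfl]
  · rw [if_neg hm0]
    by_cases hmL : m = S.length - 1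
    · subst hmL
      have c1 : (S.length - 1 = S.length - 1 ∧ S.length - 1 < S.length) := ⟨rfl, by omega⟩
      rw [if_pos (by omega : S.length - 1 < S.length), if_pos c1, if_pos rfl]
    · rw [if_neg hmL]
      by_cases hmin : m < S.length
      · have c1 : ¬(S.length - 1 = m ∧ S.length - 1 < S.length) := fun hc => hmL hc.1.symm
        have c2 : ¬((0:ℕ) = m ∧ 0 < S.length) := fun hc => hm0 hc.1.symm
        rw [if_pos hmin, if_neg c1, if_neg c2, if_pos hmin]
      · rw [if_neg hmin, if_neg hmin, entry_pair]
        split_ifs <;> rfl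

lemma inv_P (S : State) (h : Inv S) : Inv (P S) := by
  obtain ⟨h0, h1⟩ := h
  have hent : ∀ m : ℕ, -1 ≤ entry S m := by
    intro m
    cases m with
    | zero => exact h0
    | succ m => exact le_trans (by norm_num) (h1 m)
  rcases ruleOf_cases S with ⟨hr, hc⟩ | ⟨hr, _⟩ | ⟨hr, hc⟩ | ⟨hr, _, _⟩ | ⟨hr, _, _, _, hhd⟩
  · -- overflow
    have hSne : S ≠ [] := by
      rintro rfl
      exact (by simp : ¬ Odd (0:ℤ)) (by simpa [leftmost] using hc.1)
    have hL1 : 0 < S.length := List.length_pos_iff.2 hSne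
    have hPd := P_overflow S hr
    have hlm : -1 ≤ leftmost S := by
      rw [leftmost_eq_entry S hSne]; exact hent _
    constructor
    · rw [hPd, entry_append, List.length_dropLast]
      by_cases hL2 : 2 ≤ S.length
      · rw [if_pos (by omega), entry_dropLast, if_pos (by omega)]; exact h0
      · rw [if_neg (by omega), entry_pair,
          if_pos (show 0 - (S.length - 1) = 0 by omega)]
        omega
    · intro i
      rw [hPd, entry_append, List.length_dropLast]
      by_cases hcase : i + 1 < S.length - 1
      · rw [if_pos hcase, entry_dropLast, if_pos hcase]; exact h1 i
      · rw [if_neg (by omega), entry_pair]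
        by_cases he : i + 1 - (S.length - 1) = 0
        · rw [if_pos he]
          have hLge : 2 ≤ S.length := by omega
          have h1' := h1 (S.length - 2)
          have he2 : S.length - 2 + 1 = S.length - 1 := by omega
          rw [he2] at h1'
          rw [leftmost_eq_entry S hSne]
          omega
        · rw [if_neg he]
          split_ifs <;> norm_num
  · -- halt
    rw [P_halt S hr]; exact ⟨h0, h1⟩
  · -- zero
    have heva : ∀ x ∈ S, Even x := hc.1
    rcases Nat.lt_or_ge S.length 2 with hL | hL2
    · have hPd := P_zero S hr
      rcases S with _ | ⟨a, _ | ⟨b, l⟩⟩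
      · have hP2 : P ([] : State) = [0, 0] := by rw [hPd]; rfl
        rw [hP2]
        refine ⟨by norm_num, fun i => ?_⟩
        rcases i with _ | i <;> simp
      · have hP2 : P ([a] : State) = [a + 1, 0, 0] := by rw [hPd]; rfl
        have hev : Even a := heva a (by simp)
        have ha0 : -1 ≤ a := h0
        have ha : 0 ≤ a := by rcases hev with ⟨c, hcb⟩; omega
        rw [hP2]
        refine ⟨by simp; omega, fun i => ?_⟩
        rcases i with _ | _ | i <;> simp
      · exfalso
        simp only [List.length_cons] at hL
        omega
    · have hEntry := entry_P_zero S hL2 hr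
      have he0 : 0 ≤ entry S 0 := by
        have hev := heva (entry S 0)
          (by rw [entry_eq_getElem S 0 (by omega)]; exact S.getElem_mem _)
        rcases hev with ⟨c, hcb⟩
        have := h0
        omega
      constructor
      · rw [hEntry 0, if_pos rfl]; omega
      · intro i
        rw [hEntry (i+1), if_neg (by omega : ¬ i + 1 = 0)]
        by_cases hiL : i + 1 = S.length - 1
        · rw [if_pos hiL]
          have h1' := h1 i
          rw [hiL] at h1'
          omega
        · rw [if_neg hiL]
          split_ifs with hx
          · exact h1 i
          · norm_num
  · -- halve
    have hPd := P_halve S hr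
    constructor
    · rw [hPd, entry_tail]
      exact le_trans (by norm_num) (h1 0)
    · intro i
      rw [hPd, entry_tail]
      exact h1 (i+1)
  · -- increment
    have hnev := not_allEven_of_increment S hr
    have hSne : S ≠ [] := by rintro rfl; exact hnev (by simp)
    have hL1 : 0 < S.length := List.length_pos_iff.2 hSne
    have hPd := P_increment S hr
    set j := S.findIdx (fun x : ℤ => x % 2 != 0) with hjdef
    constructor
    · rw [hPd, entry_set, List.length_set, if_pos ⟨rfl, hL1⟩, headD_eq_entry]
      have h' := hent 0
      have hhd' : entry S 0 ≠ -1 := by rwa [headD_eq_entry] at hhd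
      omega
    · intro m
      have c1 : ¬((0:ℕ) = m + 1 ∧ 0 < S.length) := fun hcc => by omega
      rw [hPd, entry_set, List.length_set, if_neg c1, entry_set]
      by_cases hcx : j + 1 = m + 1 ∧ j + 1 < S.length
      · rw [if_pos hcx]
        have h' := h1 j
        unfold entry at h'
        omega
      · rw [if_neg hcx]
        exact h1 m

lemma inv_iterate (S : State) (h : Inv S) (m : ℕ) : Inv (P^[m] S) := by
  induction m with
  | zero => exact h
  | succ m ih =>
    rw [Function.iterate_succ_apply']
    exact inv_P _ ih

lemma entry_nonneg_of_forall (S : State) (h : ∀ x ∈ S, 0 ≤ x) (i : ℕ) : 0 ≤ entry S i := by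
  by_cases hL : i < S.length
  · rw [entry_eq_getElem S i hL]
    exact h _ (S.getElem_mem hL)
  · rw [entry_eq_zero_of_le _ _ (by omega)]

lemma Sk_nonneg (k : ℕ) : ∀ x ∈ Sk k, 0 ≤ x := by
  intro x hx
  simp only [Sk, List.mem_cons, List.mem_append, List.mem_map, List.mem_range,
    List.mem_singleton] at hx
  rcases hx with rfl | ⟨⟨i, _, rfl⟩ | (rfl | h)⟩
  · exact le_refl 0
  · positivity
  · exact le_refl 0
  · simp at h

lemma inv_Sk (k : ℕ) : Inv (Sk k) := by
  constructor
  · have : entry (Sk k) 0 = 0 := rfl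
    rw [this]
    norm_num
  · intro i
    exact entry_nonneg_of_forall _ (Sk_nonneg k) (i+1)

/-! ### Run lemmas -/

lemma run_down (S : State) (hL2 : 2 ≤ S.length) (hsum : ¬ Odd S.sum)
    (hmax : nOf S < 2 ^ ell S - 1) (hodd : Odd (entry S 0)) :
    ∀ t, t ≤ nOf S → (t : ℤ) ≤ entry S 0 + 1 →
      (P^[t] S).length = S.length ∧ (P^[t] S).sum = S.sum ∧
      nOf (P^[t] S) = nOf S - t ∧
      entry (P^[t] S) 0 = entry S 0 - t ∧
      entry (P^[t] S) 1 = entry S 1 + ((t + 1) / 2 : ℕ) ∧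
      (∀ s, s < t → ruleOf (P^[s] S) = .increment) := by
  intro t
  induction t with
  | zero =>
    intro _ _
    refine ⟨rfl, rfl, by simp, by simp, by norm_num, fun s hs => absurd hs (by omega)⟩
  | succ t ih =>
    intro ht1 ht2
    obtain ⟨hl, hs, hn, he0, he1, hrules⟩ := ih (by omega) (by push_cast at ht2 ⊢; linarith)
    have hellE : ell (P^[t] S) = ell S := by unfold ell; omega
    have hrule : ruleOf (P^[t] S) = .increment := by
      refine ruleOf_increment _ (by omega) ?_ ?_ ?_
      · rw [he0]; push_cast at ht2 ⊢; linarith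
      · left; omega
      · left; rw [hellE]; omega
    obtain ⟨il, isum, ie0, ie1, _, idown⟩ := increment_step _ hrule
    have hsum' : ¬ Odd (P^[t] S).sum := by rw [hs]; exact hsum
    obtain ⟨hpos, hdown⟩ := idown hsum'
    rw [Function.iterate_succ_apply']
    refine ⟨by omega, by rw [isum, hs], by rw [hdown, hn]; omega, ?_, ?_, ?_⟩
    · rw [ie0, he0]; push_cast; ring
    · rw [ie1, he1, he0]
      have hpar : Odd (entry S 0 - (t:ℤ)) ↔ Even (t:ℤ) := by
        rw [Int.odd_sub]
        simp [hodd]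
      by_cases hts : Even t
      · rw [if_pos (hpar.2 (Int.even_coe_nat t |>.2 hts))]
        have hmod : t % 2 = 0 := Nat.even_iff.1 hts
        have harith : (t + 1 + 1) / 2 = (t + 1) / 2 + 1 := by omega
        rw [harith]
        push_cast
        ring
      · rw [if_neg (fun hco => hts (Int.even_coe_nat t |>.1 (hpar.1 hco)))]
        have hmod : t % 2 = 1 := Nat.odd_iff.1 (Nat.not_even_iff_odd.1 hts)
        have harith : (t + 1 + 1) / 2 = (t + 1) / 2 := by omega
        rw [harith]
        push_cast
        ring
    · intro s hs'
      rcases Nat.lt_succ_iff_lt_or_eq.1 hs' with h | h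
      · exact hrules s h
      · rw [h]; exact hrule

lemma run_up (S : State) (hL2 : 2 ≤ S.length) (hsum : Odd S.sum)
    (hfirst : nOf S ≠ 0 ∨ Odd (entry S 0)) :
    ∀ t : ℕ, (t : ℤ) ≤ entry S 0 + 1 → nOf S + t ≤ 2 ^ ell S - 1 →
      (P^[t] S).length = S.length ∧ (P^[t] S).sum = S.sum ∧
      nOf (P^[t] S) = nOf S + t ∧
      entry (P^[t] S) 0 = entry S 0 - t ∧
      (∀ s, s < t → ruleOf (P^[s] S) = .increment) := by
  intro t
  induction t with
  | zero =>
    intro _ _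
    refine ⟨rfl, rfl, by simp, by simp, fun s hs => absurd hs (by omega)⟩
  | succ t ih =>
    intro ht1 ht2
    obtain ⟨hl, hs, hn, he0, hrules⟩ := ih (by push_cast at ht2 ht1 ⊢; linarith) (by omega)
    have hellE : ell (P^[t] S) = ell S := by unfold ell; omega
    have h2pow : 1 ≤ 2 ^ ell S := Nat.one_le_two_pow
    have hrule : ruleOf (P^[t] S) = .increment := by
      refine ruleOf_increment _ (by omega) ?_ ?_ ?_
      · rw [he0]; push_cast at ht1 ⊢; linarith
      · rcases Nat.eq_zero_or_pos t with rfl | htpos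
        · rcases hfirst with hf | hf
          · left; omega
          · right; rw [he0]; push_cast; simpa using hf
        · left; omega
      · left; rw [hellE]; omega
    obtain ⟨il, isum, ie0, ie1, iup, _⟩ := increment_step _ hrule
    have hsum' : Odd (P^[t] S).sum := by rw [hs]; exact hsum
    have hup := iup hsum'
    rw [Function.iterate_succ_apply']
    refine ⟨by omega, by rw [isum, hs], by rw [hup, hn]; omega, ?_, ?_⟩
    · rw [ie0, he0]; push_cast; ring
    · intro s hs'
      rcases Nat.lt_succ_iff_lt_or_eq.1 hs' with h | h
      · exact hrules s h
      · rw [h]; exact hrule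
/-! ### Main theorem -/

lemma sigma_eq_neg_one_iff (S : State) : sigma S = -1 ↔ ¬ Odd S.sum := by
  unfold sigma
  split_ifs with h
  · exact iff_of_false (by norm_num) (by simpa using h)
  · exact iff_of_true rfl h

/-- Let `E` be an empty state with `S_k ↦ E`, not `S_{k+1} ↦ E`, and
`ℓ(E) = 2k + 1`.  Then `E` is weakly embanked iff `a_0(E) < 2^{2k+1} - 1` and
`a_1(E) < 3·2^{2k} - 1`. -/
theorem statement_7 (k : ℕ) (E : State) (hE : IsEmptyState E)
    (hreach : Reaches (Sk k) E) (hnreach : ¬ Reaches (Sk (k + 1)) E)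
    (hlen : ell E = 2 * k + 1) :
    WeaklyEmbanked E ↔
      entry E 0 < (2 : ℤ) ^ (2 * k + 1) - 1 ∧ entry E 1 < 3 * (2 : ℤ) ^ (2 * k) - 1 := by
  obtain ⟨hEne, hn0, hsg, hnh⟩ := hE
  rcases Nat.eq_zero_or_pos k with rfl | hk
  · -- k = 0 : Sk 0 halts immediately, contradiction
    exfalso
    have hSk : Sk 0 = [0, 0] := by simp [Sk]
    have hhalt : ruleOf (Sk 0) = .halt := by
      rw [hSk]
      have hcond : HaltCond [0, 0] := by
        refine ⟨?_, rfl, rfl⟩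
        intro x hx
        simp at hx
        rcases hx with rfl | rfl <;> exact Even.zero
      have hnov : ¬ OverflowCond ([0, 0] : State) := by
        rintro ⟨ho, -⟩
        have : leftmost [0, 0] = 0 := rfl
        rw [this] at ho
        exact (Int.not_odd_iff_even.2 Even.zero) ho
      unfold ruleOf
      rw [if_neg hnov, if_pos hcond]
    obtain ⟨m, hm⟩ := hreach
    have hE0 : E = Sk 0 := by rw [← hm, iterate_halt _ hhalt]
    exact hnh (by rw [hE0]; exact hhalt)
  -- main case : k ≥ 1
  have hLE : E.length = 2 * k + 2 := by
    have h1 := hlen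
    unfold ell at h1
    have hpos : 0 < E.length := List.length_pos_iff.2 hEne
    omega
  have hsum_even : ¬ Odd E.sum := (sigma_eq_neg_one_iff E).1 hsg
  have ha1even : Even (entry E 1) := even_entry_of_nOf_zero E hn0 1 le_rfl
  have hsufeven : Even (suf E 1) := even_suf_of_nOf_zero E hn0 1 le_rfl
  have hsumdec := sum_eq_entry_add_suf E hEne
  have ha0even : Even (entry E 0) := by
    rcases Int.even_or_odd (entry E 0) with h | h
    · exact h
    · exact absurd (by rw [hsumdec]; exact h.add_even hsufeven) hsum_even
  obtain ⟨mrch, hmrch⟩ := hreach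
  have hinv : Inv E := hmrch ▸ inv_iterate _ (inv_Sk k) mrch
  have ha0 : 0 ≤ entry E 0 := by
    rcases ha0even with ⟨c, hc⟩
    have := hinv.1
    omega
  have ha1 : 0 ≤ entry E 1 := hinv.2 0
  have hallEven : ∀ x ∈ E, Even x := (allEven_iff E).2 ⟨hn0, ha0even⟩
  have hrE : ruleOf E = .zero := (ruleOf_allEven E hallEven).resolve_left hnh
  -- natural-number versions of the two entries
  set m0 := (entry E 0).toNat with hm0def
  have hm0 : (m0 : ℤ) = entry E 0 := Int.toNat_of_nonneg ha0
  set a1 := (entry E 1).toNat with ha1def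
  have ha1n : (a1 : ℤ) = entry E 1 := Int.toNat_of_nonneg ha1
  have hm0even : m0 % 2 = 0 := by
    rcases ha0even with ⟨c, hc⟩
    omega
  have ha1even' : a1 % 2 = 0 := by
    rcases ha1even with ⟨c, hc⟩
    omega
  -- powers of two
  have hppos : 1 ≤ (2:ℕ)^(2*k) := Nat.one_le_two_pow
  have hp1 : (2:ℕ)^(2*k+1) = 2 * 2^(2*k) := by ring
  have hp2 : (2:ℕ)^(2*k+2) = 4 * 2^(2*k) := by ring
  have hp3 : (2:ℕ)^(2*k+3) = 8 * 2^(2*k) := by ring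
  have heven2k : (2:ℕ)^(2*k) % 2 = 0 := by
    have h2 : (2:ℕ)^(2*k) = 2 * 2^(2*k-1) := by
      rw [← pow_succ']
      congr 1
      omega
    omega
  have hbr0 : ((2^(2*k) : ℕ) : ℤ) = (2:ℤ)^(2*k) := by push_cast; ring
  have hbr1 : ((2^(2*k+1) : ℕ) : ℤ) = (2:ℤ)^(2*k+1) := by push_cast; ring
  have hArhs : (entry E 0 < (2:ℤ)^(2*k+1) - 1) ↔ m0 < 2^(2*k+1) - 1 := by
    rw [← hm0, ← hbr1]
    omega
  have hBrhs : (entry E 1 < 3 * (2:ℤ)^(2*k) - 1) ↔ a1 < 3 * 2^(2*k) - 1 := by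
    rw [← ha1n, ← hbr0]
    omega
  -- the Zero step
  obtain ⟨hzlen, hzsum, hze0, hze1, hzn⟩ := zero_step E (by omega) hn0 hrE
  set X0 := P E with hX0
  have hX0len : X0.length = 2*k + 4 := by rw [hzlen]; omega
  have hX0ell : ell X0 = 2*k + 3 := by unfold ell; omega
  have hzn' : nOf X0 = 2^(2*k+1) - 1 := by
    have he : E.length - 1 = 2*k + 1 := by omega
    rw [hzn, he]
  have hX0sum : ¬ Odd X0.sum := by rw [hzsum]; exact hsum_even
  have hX0odd : Odd (entry X0 0) := by
    rw [hze0]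
    rcases ha0even with ⟨c, hc⟩
    exact ⟨c - 1, by omega⟩
  have hEt0 : ∀ s : ℕ, P^[s+1] E = P^[s] X0 := fun s => by
    rw [Function.iterate_succ_apply, ← hX0]
  have hrd := run_down X0 (by omega) hX0sum (by rw [hX0ell, hzn']; omega) hX0odd
  by_cases hA : m0 < 2^(2*k+1) - 1
  · -- phase 1: m0 increment steps, then halve
    obtain ⟨hl1, hs1, hn1, he01, he11, hrules1⟩ := hrd m0 (by omega)
      (by rw [hze0, ← hm0]; push_cast; linarith)
    have hrX1 : ruleOf (P^[m0] X0) = .halve :=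
      ruleOf_halve _ (by omega) (by rw [he01, hze0, ← hm0]; ring)
    obtain ⟨hl2, hs2, he2, hn2⟩ := halve_step (P^[m0] X0) (by omega)
      (by rw [he01, hze0, ← hm0]; ring)
    have hPX1 : P (P^[m0] X0) = (P^[m0] X0).tail := P_halve _ hrX1
    set X2 := (P^[m0] X0).tail with hX2def
    set H := a1 + m0 / 2 with hHdef
    have hX2len : X2.length = 2*k+3 := by rw [hl2]; omega
    have hX2ell : ell X2 = 2*k+2 := by unfold ell; omega
    have hX2e0 : entry X2 0 = (H : ℤ) := by
      rw [he2 0, he11, hze1, ← ha1n, show (m0 + 1)/2 = m0/2 by omega]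
      omega
    have hX2sum : Odd X2.sum := by
      rw [hs2, hs1, hzsum]
      exact (Int.not_odd_iff_even.1 hsum_even).add_one
    have hX2n : nOf X2 = 2^(2*k) - 1 - m0/2 := by
      rw [hn2, hn1, hzn']
      omega
    have hX2time : P^[m0+2] E = X2 := by
      rw [show m0 + 2 = (m0+1)+1 by ring, Function.iterate_succ_apply', hEt0 m0, hPX1]
    have hEt : ∀ s : ℕ, P^[s + (m0+2)] E = P^[s] X2 := fun s => by
      rw [Function.iterate_add_apply, hX2time]
    have hfirst : nOf X2 ≠ 0 ∨ Odd (entry X2 0) := by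
      by_cases hz2 : nOf X2 = 0
      · right
        rw [hX2e0, Int.odd_coe_nat, Nat.odd_iff]
        omega
      · left; exact hz2
    have hru := run_up X2 (by omega) hX2sum hfirst
    by_cases hB : a1 < 3 * 2^(2*k) - 1
    · -- both conditions hold : weakly embanked
      have hbound2 : nOf X2 + (H + 1) ≤ 2 ^ ell X2 - 1 := by
        rw [hX2n, hX2ell]
        omega
      obtain ⟨hl3, hs3, hn3, he03, hrules3⟩ := hru (H+1)
        (by rw [hX2e0]; push_cast; omega) hbound2
      have hrX3 : ruleOf (P^[H+1] X2) = .halve :=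
        ruleOf_halve _ (by omega) (by rw [he03, hX2e0]; push_cast; ring)
      have hRj1 : ruleOf (P^[m0+1] E) = .halve := by rw [hEt0 m0]; exact hrX1
      have hRj2 : ruleOf (P^[m0+H+3] E) = .halve := by
        rw [show m0+H+3 = (H+1) + (m0+2) by ring, hEt (H+1)]
        exact hrX3
      have hRULE : ∀ t, 0 < t → t < m0 + H + 3 → t ≠ m0 + 1 →
          ruleOf (P^[t] E) = .increment := by
        intro t ht0 htlt htne
        by_cases hcase : t ≤ m0
        · obtain ⟨s, rfl⟩ : ∃ s, t = s + 1 := ⟨t - 1, by omega⟩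
          rw [hEt0 s]
          exact hrules1 s (by omega)
        · obtain ⟨s, rfl⟩ : ∃ s, t = s + (m0 + 2) := ⟨t - (m0+2), by omega⟩
          rw [hEt s]
          exact hrules3 s (by omega)
      have hInTE : InTE E (m0 + H + 3) := by
        intro t ht0 htle hemp
        obtain ⟨-, hempn, hemps, -⟩ := hemp
        by_cases hcase : t ≤ m0 + 1
        · obtain ⟨s, rfl⟩ : ∃ s, t = s + 1 := ⟨t - 1, by omega⟩
          rw [hEt0 s] at hempn
          obtain ⟨-, -, hnn, -, -, -⟩ := hrd s (by omega)
            (by rw [hze0, ← hm0]; push_cast; omega)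
          rw [hnn, hzn'] at hempn
          omega
        · obtain ⟨s, rfl⟩ : ∃ s, t = s + (m0 + 2) := ⟨t - (m0+2), by omega⟩
          rw [hEt s] at hemps
          obtain ⟨-, hss, -, -, -⟩ := hru s (by rw [hX2e0]; push_cast; omega)
            (by rw [hX2n, hX2ell]; omega)
          have hoddz : Odd (P^[s] X2).sum := by rw [hss]; exact hX2sum
          rw [sigma, if_pos hoddz] at hemps
          norm_num at hemps
      refine iff_of_true ⟨⟨hEne, hn0, hsg, hnh⟩, m0+1, m0+H+3, by omega, by omega,
        hInTE, hRj1, hRj2, hRULE⟩ ⟨hArhs.2 hA, hBrhs.2 hB⟩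
    · -- a1 too large : overflow before second halve
      have ha1big : 3 * 2^(2*k) ≤ a1 := by omega
      set T := 3 * 2^(2*k) + m0/2 with hTdef
      have hbound2 : nOf X2 + T ≤ 2 ^ ell X2 - 1 := by
        rw [hX2n, hX2ell]
        omega
      obtain ⟨hl4, hs4, hn4, he04, hrules4⟩ := hru T
        (by rw [hX2e0]; push_cast; omega) hbound2
      have hrOv : ruleOf (P^[T] X2) = .overflow := by
        refine ruleOf_overflow _ (by omega) ?_ ?_
        · rw [hn4, hX2n, show ell (P^[T] X2) = 2*k+2 by unfold ell; omega]
          omega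
        · rw [he04, hX2e0]
          have hHT : H % 2 = T % 2 := by omega
          rw [Int.even_sub, Int.even_coe_nat, Int.even_coe_nat, Nat.even_iff, Nat.even_iff, hHT]
      have hu : ruleOf (P^[m0 + T + 2] E) = .overflow := by
        rw [show m0+T+2 = T + (m0+2) by ring, hEt T]
        exact hrOv
      have hwe : ¬ WeaklyEmbanked E := by
        rintro ⟨-, j1', j2', hj1pos, hj12, hInTE', hh1, hh2, hinc⟩
        have hincr : ∀ t, 0 < t → t < m0 + T + 2 → t ≠ m0 + 1 →
            ruleOf (P^[t] E) = .increment := by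
          intro t ht0 htlt htne
          by_cases hcase : t ≤ m0
          · obtain ⟨s, rfl⟩ : ∃ s, t = s + 1 := ⟨t - 1, by omega⟩
            rw [hEt0 s]
            exact hrules1 s (by omega)
          · obtain ⟨s, rfl⟩ : ∃ s, t = s + (m0 + 2) := ⟨t - (m0+2), by omega⟩
            rw [hEt s]
            exact hrules4 s (by omega)
        have hhalves : ∀ t, 0 < t → t ≤ m0 + T + 2 → ruleOf (P^[t] E) = .halve →
            t = m0 + 1 := by
          intro t ht0 htle hthv
          by_contra htne
          by_cases htu : t = m0 + T + 2
          · rw [htu, hu] at hthv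
            exact Rule.noConfusion hthv
          · rw [hincr t ht0 (by omega) htne] at hthv
            exact Rule.noConfusion hthv
        by_cases hj2u : j2' ≤ m0 + T + 2
        · have hj2eq := hhalves j2' (by omega) hj2u hh2
          have hj1eq := hhalves j1' (by omega) (by omega) hh1
          omega
        · have hne : m0 + T + 2 ≠ j1' := by
            intro hc
            rw [← hc, hu] at hh1
            exact Rule.noConfusion hh1
          have := hinc (m0+T+2) (by omega) (by omega) hne
          rw [hu] at this
          exact Rule.noConfusion this
      exact iff_of_false hwe (fun hrhs => hB (hBrhs.1 hrhs.2))
  · -- a0 too large : a Zero/Halt state is reached before any halve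
    set n0v := 2^(2*k+1) - 1 with hn0vdef
    have hm0big : 2^(2*k+1) ≤ m0 := by omega
    obtain ⟨hl5, hs5, hn5, he05, he15, hrules5⟩ := hrd n0v (by omega)
      (by rw [hze0, ← hm0]; omega)
    have hall5 : ∀ x ∈ P^[n0v] X0, Even x := by
      refine (allEven_iff _).2 ⟨by rw [hn5, hzn']; omega, ?_⟩
      rw [he05, hze0, ← hm0, Int.even_iff]
      have hcast : ((n0v : ℕ) : ℤ) = ((2^(2*k+1) : ℕ) : ℤ) - 1 := by omega
      rw [hcast]
      omega
    have hu : ruleOf (P^[n0v + 1] E) = .halt ∨ ruleOf (P^[n0v + 1] E) = .zero := by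
      rw [hEt0 n0v]
      exact ruleOf_allEven _ hall5
    have hwe : ¬ WeaklyEmbanked E := by
      rintro ⟨-, j1', j2', hj1pos, hj12, hInTE', hh1, hh2, hinc⟩
      have hnothalve : ∀ t, 0 < t → t ≤ n0v + 1 → ruleOf (P^[t] E) ≠ .halve := by
        intro t ht0 htle hthv
        by_cases htu : t = n0v + 1
        · rw [htu] at hthv
          rcases hu with h | h <;> (rw [h] at hthv; exact Rule.noConfusion hthv)
        · obtain ⟨s, rfl⟩ : ∃ s, t = s + 1 := ⟨t - 1, by omega⟩
          rw [hEt0 s] at hthv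
          rw [hrules5 s (by omega)] at hthv
          exact Rule.noConfusion hthv
      by_cases hj2u : j2' ≤ n0v + 1
      · exact hnothalve j2' (by omega) hj2u hh2
      · have hne : n0v + 1 ≠ j1' := by
          intro hc
          rw [← hc] at hh1
          exact hnothalve (n0v+1) (by omega) le_rfl hh1
        have := hinc (n0v+1) (by omega) (by omega) hne
        rcases hu with h | h <;> (rw [h] at this; exact Rule.noConfusion this)
    exact iff_of_false hwe (fun hrhs => hA (hArhs.1 hrhs.1))
end Skelet17
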